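/- Let f be a nonconstant map in C(Σ, M). Then the ℂ*-orbit of f, namely the set { f ∘ g_a : a ∈ ℂ, a ≠ 0 }, is a closed subset of the subspace of nonconstant maps in C(Σ, M): if h_n = f ∘ g_{a_n} converges uniformly to a nonconstant map f₂ ∈ C(Σ, M), then f₂ = f ∘ g_a for some nonzero a ∈ ℂ. -/

import Mathlib

open OnePoint Filter Topology

/-- The reparametrization `g_a : Σ → Σ` of the Riemann sphere `Σ = OnePoint ℂ`
extending `z ↦ a · z` on `ℂ` and fixing the point at infinity. -/
noncomputable def gA (a : ℂ) (ha : a ≠ 0) : C(OnePoint ℂ, OnePoint ℂ) where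
  toFun := OnePoint.map (fun z => a * z)
  continuous_toFun := (Homeomorph.onePointCongr (Homeomorph.mulLeft₀ a ha)).continuous

theorem gA_apply (a : ℂ) (ha : a ≠ 0) (x : OnePoint ℂ) :
    gA a ha x = OnePoint.map (fun z => a * z) x := rfl

/-- For a nonconstant continuous map `f : Σ → M`, the `ℂ*`-orbit of `f` is closed in the
subspace of nonconstant maps: any nonconstant uniform limit of reparametrizations of `f`
is itself a reparametrization of `f`. -/
theorem orbit_closed_in_nonconstant {M : Type*} [MetricSpace M] [CompactSpace M]
    (f : C(OnePoint ℂ, M)) (hf : ∃ x y, f x ≠ f y) (f₂ : C(OnePoint ℂ, M))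
    (hf₂ : ∃ x y, f₂ x ≠ f₂ y)
    (hcl : f₂ ∈ closure {k : C(OnePoint ℂ, M) | ∃ (a : ℂ) (ha : a ≠ 0), k = f.comp (gA a ha)}) :
    ∃ (a : ℂ) (ha : a ≠ 0), f₂ = f.comp (gA a ha) := by
  obtain ⟨u, hu, hlim⟩ := mem_closure_iff_seq_limit.mp hcl
  choose a ha hk using hu
  set v : ℕ → OnePoint ℂ := fun n => (a n : OnePoint ℂ) with hv_def
  obtain ⟨α, hα⟩ := exists_clusterPt_of_compactSpace (Filter.map v Filter.atTop)
  set L : Filter ℕ := Filter.atTop ⊓ Filter.comap v (𝓝 α) with hL_def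
  have hLne : L.NeBot := by
    rw [hL_def, inf_comm]
    refine Filter.NeBot.of_map (m := v) ?_
    rw [Filter.push_pull']
    rwa [ClusterPt] at hα
  have hv : Filter.Tendsto v L (𝓝 α) := tendsto_comap.mono_left inf_le_right
  have hkL : Filter.Tendsto u L (𝓝 f₂) := hlim.mono_left inf_le_left
  have heval : ∀ x : OnePoint ℂ,
      Filter.Tendsto (fun n => f ((gA (a n) (ha n)) x)) L (𝓝 (f₂ x)) := by
    intro x
    have h1 : Filter.Tendsto (fun n => (u n) x) L (𝓝 (f₂ x)) :=
      ((continuous_eval_const x).tendsto f₂).comp hkL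
    simpa only [hk, ContinuousMap.comp_apply] using h1
  have hinfty : f₂ ∞ = f ∞ := by
    refine tendsto_nhds_unique (heval ∞) ?_
    simpa [gA_apply] using (tendsto_const_nhds : Filter.Tendsto (fun _ : ℕ => f ∞) L (𝓝 (f ∞)))
  induction α using OnePoint.rec with
  | infty =>
    -- degenerate case a_n → ∞ : f₂ would be constant
    exfalso
    have haL : Filter.Tendsto a L (Bornology.cobounded ℂ) := by
      have : Filter.Tendsto a L (Filter.comap ((↑) : ℂ → OnePoint ℂ) (𝓝 ∞)) :=
        Filter.tendsto_comap_iff.mpr hv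
      rwa [OnePoint.comap_coe_nhds_infty, Filter.coclosedCompact_eq_cocompact,
        ← Metric.cobounded_eq_cocompact] at this
    have hval : ∀ z : ℂ, z ≠ 0 → f₂ z = f ∞ := by
      intro z hz
      refine tendsto_nhds_unique (heval z) ?_
      have hnorm : Filter.Tendsto (fun n => ‖a n‖) L Filter.atTop :=
        tendsto_norm_atTop_iff_cobounded.mpr haL
      have hmul : Filter.Tendsto (fun n => a n * z) L (Bornology.cobounded ℂ) := by
        rw [← tendsto_norm_atTop_iff_cobounded]
        simpa [norm_mul] using hnorm.atTop_mul_const (norm_pos_iff.mpr hz)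
      have hcoe : Filter.Tendsto (fun n => ((a n * z : ℂ) : OnePoint ℂ)) L (𝓝 ∞) := by
        refine OnePoint.tendsto_coe_infty.comp ?_
        rwa [Filter.coclosedCompact_eq_cocompact, ← Metric.cobounded_eq_cocompact]
      have := (f.continuous.tendsto ∞).comp hcoe
      simpa [gA_apply, Function.comp_def] using this
    have hzero : f₂ (0 : ℂ) = f ∞ := by
      have hc : Filter.Tendsto (fun z : ℂ => f₂ z) (𝓝[≠] (0 : ℂ)) (𝓝 (f₂ (0 : ℂ))) := by
        have := (f₂.continuous.comp OnePoint.continuous_coe).tendsto (0 : ℂ)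
        exact this.mono_left nhdsWithin_le_nhds
      have hc' : Filter.Tendsto (fun z : ℂ => f₂ z) (𝓝[≠] (0 : ℂ)) (𝓝 (f ∞)) := by
        refine Filter.Tendsto.congr' ?_ tendsto_const_nhds
        filter_upwards [self_mem_nhdsWithin] with z hz
        exact (hval z hz).symm
      exact tendsto_nhds_unique hc hc'
    obtain ⟨x, y, hxy⟩ := hf₂
    have hall : ∀ x : OnePoint ℂ, f₂ x = f ∞ := by
      intro x
      induction x using OnePoint.rec with
      | infty => exact hinfty
      | coe z =>
        rcases eq_or_ne z 0 with rfl | hz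
        · exact hzero
        · exact hval z hz
    exact hxy ((hall x).trans (hall y).symm)
  | coe c =>
    have hac : Filter.Tendsto a L (𝓝 c) := by
      have : Filter.Tendsto a L (Filter.comap ((↑) : ℂ → OnePoint ℂ) (𝓝 (c : OnePoint ℂ))) :=
        Filter.tendsto_comap_iff.mpr hv
      rwa [OnePoint.comap_coe_nhds] at this
    rcases eq_or_ne c 0 with rfl | hc
    · -- degenerate case a_n → 0 : f₂ would be constant
      exfalso
      have hval : ∀ z : ℂ, f₂ z = f (0 : ℂ) := by
        intro z
        refine tendsto_nhds_unique (heval z) ?_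
        have hmul : Filter.Tendsto (fun n => a n * z) L (𝓝 (0 : ℂ)) := by
          simpa using hac.mul_const z
        have hcoe : Filter.Tendsto (fun n => ((a n * z : ℂ) : OnePoint ℂ))
            L (𝓝 ((0 : ℂ) : OnePoint ℂ)) := (OnePoint.continuous_coe.tendsto _).comp hmul
        have := (f.continuous.tendsto _).comp hcoe
        simpa [gA_apply, Function.comp_def] using this
      have hzero : f₂ ∞ = f (0 : ℂ) := by
        have hc1 : Filter.Tendsto (fun z : ℂ => f₂ z) (Filter.coclosedCompact ℂ)
            (𝓝 (f₂ ∞)) :=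
          (f₂.continuous.tendsto ∞).comp OnePoint.tendsto_coe_infty
        have hne : (Filter.coclosedCompact ℂ).NeBot := by
          rw [Filter.coclosedCompact_eq_cocompact]; infer_instance
        have hc2 : Filter.Tendsto (fun z : ℂ => f₂ z) (Filter.coclosedCompact ℂ)
            (𝓝 (f (0 : ℂ))) := by
          refine Filter.Tendsto.congr (fun z => (hval z).symm) tendsto_const_nhds
        exact tendsto_nhds_unique hc1 hc2
      obtain ⟨x, y, hxy⟩ := hf₂
      have hall : ∀ x : OnePoint ℂ, f₂ x = f (0 : ℂ) := by
        intro x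
        induction x using OnePoint.rec with
        | infty => exact hzero
        | coe z => exact hval z
      exact hxy ((hall x).trans (hall y).symm)
    · refine ⟨c, hc, ?_⟩
      ext x
      refine tendsto_nhds_unique (heval x) ?_
      induction x using OnePoint.rec with
      | infty =>
        simpa [gA_apply] using (tendsto_const_nhds : Filter.Tendsto (fun _ : ℕ => f ∞) L (𝓝 (f ∞)))
      | coe z =>
        have hmul : Filter.Tendsto (fun n => a n * z) L (𝓝 (c * z)) := hac.mul_const z
        have hcoe : Filter.Tendsto (fun n => ((a n * z : ℂ) : OnePoint ℂ))
            L (𝓝 ((c * z : ℂ) : OnePoint ℂ)) := (OnePoint.continuous_coe.tendsto _).comp hmul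
        have := (f.continuous.tendsto _).comp hcoe
        simpa [gA_apply, Function.comp_def] using this
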